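/- arXiv:1104.1782 — 3 statements merged into one kernel-verified Lean document; each statement's English description precedes it below -/
import Mathlib

section
/- The integral ∫_{1}^{∞} dx/√(x³ - 1) equals Γ(1/3)³ / (2^{4/3} π). -/
open MeasureTheory Real

lemma beta_val :
    ∫ x in (0:ℝ)..1, x ^ (-(5:ℝ)/6) * (1 - x) ^ (-(1:ℝ)/2) =
      Real.Gamma (1/6) * Real.Gamma (1/2) / Real.Gamma (2/3) := by
  have key : Complex.betaIntegral (1/6) (1/2) =
      ((∫ x in (0:ℝ)..1, x ^ (-(5:ℝ)/6) * (1 - x) ^ (-(1:ℝ)/2) : ℝ) : ℂ) := by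
    rw [Complex.betaIntegral, ← intervalIntegral.integral_ofReal]
    apply intervalIntegral.integral_congr
    intro x hx
    rw [Set.uIcc_of_le zero_le_one] at hx
    obtain ⟨h0, h1⟩ := hx
    simp only [Complex.ofReal_mul]
    rw [Complex.ofReal_cpow h0, Complex.ofReal_cpow (by linarith : (0:ℝ) ≤ 1 - x)]
    push_cast
    norm_num
  have hG := Complex.Gamma_mul_Gamma_eq_betaIntegral
    (s := 1/6) (t := 1/2) (by norm_num) (by norm_num)
  rw [key, show (1:ℂ)/6 + 1/2 = 2/3 by norm_num] at hG
  have h16 : Complex.Gamma (1/6) = (Real.Gamma (1/6) : ℂ) := by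
    rw [← Complex.Gamma_ofReal]; norm_num
  have h12 : Complex.Gamma (1/2) = (Real.Gamma (1/2) : ℂ) := by
    rw [← Complex.Gamma_ofReal]; norm_num
  have h23 : Complex.Gamma (2/3) = (Real.Gamma (2/3) : ℂ) := by
    rw [← Complex.Gamma_ofReal]; norm_num
  rw [h16, h12, h23, ← Complex.ofReal_mul, ← Complex.ofReal_mul,
    Complex.ofReal_inj] at hG
  have hne : Real.Gamma (2/3) ≠ 0 := (Real.Gamma_pos_of_pos (by norm_num)).ne'
  field_simp
  linarith [hG]

lemma subst_step :
    ∫ x in Set.Ioi (1 : ℝ), 1 / Real.sqrt (x ^ 3 - 1) =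
      (1/3) * ∫ x in (0:ℝ)..1, x ^ (-(5:ℝ)/6) * (1 - x) ^ (-(1:ℝ)/2) := by
  have himg : (fun t : ℝ => t ^ (-(1:ℝ)/3)) '' Set.Ioo 0 1 = Set.Ioi 1 := by
    ext y
    constructor
    · rintro ⟨t, ⟨ht0, ht1⟩, rfl⟩
      exact (Real.one_lt_rpow_iff_of_pos ht0).2 (Or.inr ⟨ht1, by norm_num⟩)
    · intro hy
      have hy0 : (0:ℝ) < y := lt_trans one_pos hy
      refine ⟨y ^ (-(3:ℝ)), ⟨Real.rpow_pos_of_pos hy0 _,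
        Real.rpow_lt_one_of_one_lt_of_neg hy (by norm_num)⟩, ?_⟩
      show (y ^ (-(3:ℝ))) ^ (-(1:ℝ)/3) = y
      rw [← Real.rpow_mul hy0.le]
      norm_num
  have hderiv : ∀ t ∈ Set.Ioo (0:ℝ) 1,
      HasDerivWithinAt (fun t : ℝ => t ^ (-(1:ℝ)/3))
        ((-(1:ℝ)/3) * t ^ (-(1:ℝ)/3 - 1)) (Set.Ioo 0 1) t := fun t ht =>
    (Real.hasDerivAt_rpow_const (Or.inl ht.1.ne')).hasDerivWithinAt
  have hinj : Set.InjOn (fun t : ℝ => t ^ (-(1:ℝ)/3)) (Set.Ioo 0 1) := by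
    intro a ha b hb h
    have h2 := congrArg (fun z : ℝ => z ^ (-(3:ℝ))) h
    simp only [← Real.rpow_mul ha.1.le, ← Real.rpow_mul hb.1.le] at h2
    norm_num [Real.rpow_one] at h2
    exact h2
  rw [← himg, MeasureTheory.integral_image_eq_integral_abs_deriv_smul
    measurableSet_Ioo hderiv hinj]
  rw [MeasureTheory.setIntegral_congr_fun measurableSet_Ioo
    (g := fun t => (1/3) * (t ^ (-(5:ℝ)/6) * (1 - t) ^ (-(1:ℝ)/2))) ?_]
  · rw [MeasureTheory.integral_const_mul]
    congr 1
    rw [intervalIntegral.integral_of_le zero_le_one,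
      MeasureTheory.integral_Ioc_eq_integral_Ioo]
  · intro t ht
    obtain ⟨ht0, ht1⟩ := ht
    have h1t : (0:ℝ) < 1 - t := by linarith
    have hcube : (t ^ (-(1:ℝ)/3)) ^ 3 = t⁻¹ := by
      rw [← Real.rpow_natCast (t ^ (-(1:ℝ)/3)) 3, ← Real.rpow_mul ht0.le]
      norm_num
      rw [show (-1:ℝ) = -(1:ℝ) by norm_num, Real.rpow_neg ht0.le, Real.rpow_one]
    have e1 : |(-(1:ℝ)/3) * t ^ (-(1:ℝ)/3 - 1)| = (1/3) * t ^ (-(4:ℝ)/3) := by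
      rw [abs_mul, abs_of_pos (Real.rpow_pos_of_pos ht0 _)]
      norm_num
    have e2 : t ^ (-(5:ℝ)/6) = t ^ (-(4:ℝ)/3) * t ^ ((1:ℝ)/2) := by
      rw [← Real.rpow_add ht0]; norm_num
    have e3 : (1 - t) ^ (-(1:ℝ)/2) = ((1 - t) ^ ((1:ℝ)/2))⁻¹ := by
      rw [show -(1:ℝ)/2 = -((1:ℝ)/2) by norm_num, Real.rpow_neg h1t.le]
    have hsub : t⁻¹ - 1 = (1 - t) / t := by field_simp
    simp only [smul_eq_mul]
    rw [hcube, hsub, Real.sqrt_div h1t.le, e1, e2, e3, one_div_div,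
      Real.sqrt_eq_rpow, Real.sqrt_eq_rpow]
    ring

theorem fermat_elliptic_period :
    ∫ x in Set.Ioi (1 : ℝ), 1 / Real.sqrt (x ^ 3 - 1) =
      Real.Gamma (1 / 3) ^ 3 / (2 ^ ((4 : ℝ) / 3) * Real.pi) := by
  rw [subst_step, beta_val]
  have ha : 0 < Real.Gamma (1/3) := Real.Gamma_pos_of_pos (by norm_num)
  have hb : 0 < Real.Gamma (2/3) := Real.Gamma_pos_of_pos (by norm_num)
  have hq : (0:ℝ) < Real.sqrt 3 := Real.sqrt_pos.2 (by norm_num)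
  have hs : (0:ℝ) < Real.sqrt π := Real.sqrt_pos.2 Real.pi_pos
  have hdup := Real.Gamma_mul_Gamma_add_half (1/6)
  rw [show (1:ℝ)/6 + 1/2 = 2/3 by norm_num, show 2 * ((1:ℝ)/6) = 1/3 by norm_num,
    show (1:ℝ) - 1/3 = 2/3 by norm_num] at hdup
  have hrefl := Real.Gamma_mul_Gamma_one_sub (1/3)
  rw [show (1:ℝ) - 1/3 = 2/3 by norm_num, show π * (1/3) = π/3 by ring,
    Real.sin_pi_div_three] at hrefl
  have h12 : Real.Gamma (1/2) = Real.sqrt π := Real.Gamma_one_half_eq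
  have hpp : Real.sqrt π * Real.sqrt π = π := Real.mul_self_sqrt Real.pi_pos.le
  have h33 : Real.sqrt 3 * Real.sqrt 3 = 3 := Real.mul_self_sqrt (by norm_num)
  have h24 : (2:ℝ) ^ ((2:ℝ)/3) * 2 ^ ((4:ℝ)/3) = 4 := by
    rw [← Real.rpow_add two_pos]
    norm_num
  have hu : (0:ℝ) < (2:ℝ) ^ ((2:ℝ)/3) := Real.rpow_pos_of_pos two_pos _
  have hv : (0:ℝ) < (2:ℝ) ^ ((4:ℝ)/3) := Real.rpow_pos_of_pos two_pos _
  have hrefl' : Real.Gamma (1/3) * Real.Gamma (2/3) * Real.sqrt 3 = 2 * π := by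
    rw [hrefl]
    field_simp
  rw [h12]
  have hc : Real.Gamma (1/6) = Real.Gamma (1/3) * 2^((2:ℝ)/3) * Real.sqrt π / Real.Gamma (2/3) :=
    (eq_div_iff hb.ne').2 hdup
  rw [hc]
  field_simp
  ring_nf
  linear_combination (π * (Real.sqrt π * Real.sqrt π)) * h24 +
    (4 * π) * hpp +
    (Real.Gamma (1/3) ^ 2 * Real.Gamma (2/3) ^ 2) * h33 -
    (Real.Gamma (1/3) * Real.Gamma (2/3) * Real.sqrt 3 + 2 * π) * hrefl'
end

section
/- Let b ∈ ℂ⁴ with |b| < 1, δ = 1 − b·b ≠ 0, θ = i√3, and ω = e^{2πi/3}. Define A as the 5×5 matrix with first row (1, b₁, b₂, b₃, b₄), first column (1, b₁, b₂, b₃, b₄)ᵀ, and identity in the lower-right 4×4 block, and B as the matrix with first row (ω, ω̄b₁, ω̄b₂, ω̄b₃, ω̄b₄), first column (ω, ω̄b₁, ω̄b₂, ω̄b₃, ω̄b₄)ᵀ, and ωI in the lower-right 4×4 block. Then Z = A⁻¹B satisfies Z = ωI + (θ/δ)·N, where N₀₀ = b·b, N₀ⱼ = Nⱼ₀ = −bⱼ,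 and Nᵢⱼ = bᵢbⱼ for i,j ∈ {1,…,4}. -/
open Complex Finset Matrix

set_option maxHeartbeats 800000

/-- With `A = (1, b; bᵀ, I)` and `B = (ω, ω̄b; ω̄bᵀ, ωI)`, the normalized
period matrix `Z = A⁻¹B` equals `ωI + (θ/δ)N`, where `N₀₀ = b·b`,
`N₀ⱼ = Nⱼ₀ = −bⱼ`, `Nᵢⱼ = bᵢbⱼ`, `θ = i√3`, `δ = 1 − b·b`. -/
theorem Z_formula (b : Fin 4 → ℂ)
    (hb : ∑ i, ‖b i‖ ^ 2 < 1)
    (δ θ ω : ℂ)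
    (hδ : δ = 1 - ∑ i, (b i) ^ 2) (hδ0 : δ ≠ 0)
    (hθ : θ = Complex.I * Real.sqrt 3)
    (hω : ω = Complex.exp (2 * Real.pi * Complex.I / 3))
    (A B N : Matrix (Option (Fin 4)) (Option (Fin 4)) ℂ)
    (hA : ∀ i j, A i j = match i, j with
      | none, none => 1
      | none, some j => b j
      | some i, none => b i
      | some i, some j => if i = j then 1 else 0)
    (hB : ∀ i j, B i j = match i, j with
      | none, none => ω
      | none, some j => starRingEnd ℂ ω * b j
      | some i, none => starRingEnd ℂ ω * b i
      | some i, some j => if i = j then ω else 0)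
    (hN : ∀ i j, N i j = match i, j with
      | none, none => ∑ k, (b k) ^ 2
      | none, some j => -b j
      | some i, none => -b i
      | some i, some j => b i * b j) :
    A⁻¹ * B = ω • (1 : Matrix (Option (Fin 4)) (Option (Fin 4)) ℂ) + (θ / δ) • N := by
  -- key fact: conj ω = ω - θ
  have hconj : starRingEnd ℂ ω = ω - θ := by
    have h1 : ω = (Real.cos (2*Real.pi/3) : ℂ) + (Real.sin (2*Real.pi/3) : ℂ) * Complex.I := by
      rw [hω, show (2 * (Real.pi:ℂ) * Complex.I / 3) = ((2*Real.pi/3 : ℝ) : ℂ) * Complex.I by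
        push_cast; ring, Complex.exp_mul_I]
      rw [← Complex.ofReal_cos, ← Complex.ofReal_sin]
    have hsin : Real.sin (2*Real.pi/3) = Real.sqrt 3 / 2 := by
      rw [show (2*Real.pi/3:ℝ) = Real.pi - Real.pi/3 by ring, Real.sin_pi_sub,
        Real.sin_pi_div_three]
    rw [h1, hθ, hsin]
    simp only [map_add, _root_.map_mul, Complex.conj_ofReal, Complex.conj_I]
    push_cast
    ring
  have hs : (∑ i, (b i) ^ 2) = 1 - δ := by rw [hδ]; ring
  set M : Matrix (Option (Fin 4)) (Option (Fin 4)) ℂ :=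
    ω • (1 : Matrix (Option (Fin 4)) (Option (Fin 4)) ℂ) + (θ / δ) • N with hM
  have hMe : ∀ i j, M i j = match i, j with
    | none, none => ω + θ / δ * ∑ k, (b k) ^ 2
    | none, some j => θ / δ * (-b j)
    | some i, none => θ / δ * (-b i)
    | some i, some j => (if i = j then ω else 0) + θ / δ * (b i * b j) := by
    intro i j
    match i, j with
    | none, none =>
      simp [hM, Matrix.add_apply, Matrix.smul_apply, Matrix.one_apply, hN, smul_eq_mul]
    | none, some j =>
      simp [hM, Matrix.add_apply, Matrix.smul_apply, Matrix.one_apply, hN, smul_eq_mul]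
    | some i, none =>
      simp [hM, Matrix.add_apply, Matrix.smul_apply, Matrix.one_apply, hN, smul_eq_mul]
    | some i, some j =>
      by_cases h : i = j <;>
        simp [hM, Matrix.add_apply, Matrix.smul_apply, Matrix.one_apply, hN, smul_eq_mul, h]
  -- explicit left inverse of A
  set C : Matrix (Option (Fin 4)) (Option (Fin 4)) ℂ := fun i j =>
    match i, j with
    | none, none => 1/δ
    | none, some j => -b j / δ
    | some i, none => -b i / δ
    | some i, some j => (if i = j then 1 else 0) + b i * b j / δ with hC
  have hCA : C * A = 1 := by
    ext i j
    match i, j with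
    | none, none =>
      rw [Matrix.mul_apply, Fintype.sum_option]
      simp only [Matrix.mul_apply, Fintype.sum_option, hC, hA, Matrix.one_apply_eq]
      have e : ∑ k, -b k / δ * b k = ∑ k, (-(1:ℂ)/δ) * (b k)^2 :=
        Finset.sum_congr rfl fun k _ => by ring
      rw [e, ← Finset.mul_sum, hs]
      field_simp
      ring
    | none, some j =>
      rw [Matrix.mul_apply, Fintype.sum_option]
      simp only [Matrix.mul_apply, Fintype.sum_option, hC, hA]
      have e : ∑ k, -b k / δ * (if k = j then 1 else 0)
          = ∑ k, (if k = j then -b j / δ else 0) :=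
        Finset.sum_congr rfl fun k _ => by by_cases h : k = j <;> simp [h]
      rw [e, Finset.sum_ite_eq']
      simp only [Finset.mem_univ, if_true, Matrix.one_apply, reduceCtorEq, if_false]
      field_simp
      ring
    | some i, none =>
      rw [Matrix.mul_apply, Fintype.sum_option]
      simp only [Matrix.mul_apply, Fintype.sum_option, hC, hA]
      have e : ∑ k, ((if i = k then 1 else 0) + b i * b k / δ) * b k
          = (∑ k, (if i = k then b k else 0)) + ∑ k, (b i / δ) * (b k)^2 := by
        rw [← Finset.sum_add_distrib]
        exact Finset.sum_congr rfl fun k _ => by by_cases h : i = k <;> simp [h] <;> ring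
      rw [e, Finset.sum_ite_eq, ← Finset.mul_sum, hs]
      simp only [Finset.mem_univ, if_true, Matrix.one_apply, reduceCtorEq, if_false]
      field_simp
      ring
    | some i, some j =>
      rw [Matrix.mul_apply, Fintype.sum_option]
      simp only [Matrix.mul_apply, Fintype.sum_option, hC, hA]
      have e : ∑ k, ((if i = k then 1 else 0) + b i * b k / δ) * (if k = j then 1 else 0)
          = ∑ k, (if k = j then (if i = j then 1 else 0) + b i * b j / δ else 0) :=
        Finset.sum_congr rfl fun k _ => by by_cases h : k = j <;> simp [h]
      rw [e, Finset.sum_ite_eq']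
      simp only [Finset.mem_univ, if_true, Matrix.one_apply, Option.some.injEq]
      by_cases h : i = j <;> simp [h] <;> field_simp <;> ring
  have hAM : A * M = B := by
    ext i j
    match i, j with
    | none, none =>
      rw [Matrix.mul_apply, Fintype.sum_option]
      simp only [hA, hB, hMe]
      have e : ∑ k, b k * (θ / δ * (-b k)) = ∑ k, (-(θ/δ)) * (b k)^2 :=
        Finset.sum_congr rfl fun k _ => by ring
      rw [e, ← Finset.mul_sum, hs]
      ring
    | none, some j =>
      rw [Matrix.mul_apply, Fintype.sum_option]
      simp only [hA, hB, hMe]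
      have e : ∑ k, b k * ((if k = j then ω else 0) + θ / δ * (b k * b j))
          = (∑ k, (if k = j then b j * ω else 0)) + ∑ k, (θ/δ * b j) * (b k)^2 := by
        rw [← Finset.sum_add_distrib]
        exact Finset.sum_congr rfl fun k _ => by by_cases h : k = j <;> simp [h] <;> ring
      rw [e, Finset.sum_ite_eq', ← Finset.mul_sum, hs, hconj]
      simp only [Finset.mem_univ, if_true]
      field_simp
      ring
    | some i, none =>
      rw [Matrix.mul_apply, Fintype.sum_option]
      simp only [hA, hB, hMe]
      have e : ∑ k, (if i = k then 1 else 0) * (θ / δ * (-b k))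
          = ∑ k, (if i = k then θ / δ * (-b k) else 0) :=
        Finset.sum_congr rfl fun k _ => by by_cases h : i = k <;> simp [h]
      rw [e, Finset.sum_ite_eq, hs, hconj]
      simp only [Finset.mem_univ, if_true]
      field_simp
      ring
    | some i, some j =>
      rw [Matrix.mul_apply, Fintype.sum_option]
      simp only [hA, hB, hMe]
      have e : ∑ k, (if i = k then 1 else 0) * ((if k = j then ω else 0) + θ / δ * (b k * b j))
          = ∑ k, (if i = k then (if k = j then ω else 0) + θ / δ * (b k * b j) else 0) :=
        Finset.sum_congr rfl fun k _ => by by_cases h : i = k <;> simp [h]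
      rw [e, Finset.sum_ite_eq]
      simp only [Finset.mem_univ, if_true]
      by_cases h : i = j <;> simp [h] <;> ring
  have hAinv : A⁻¹ = C := Matrix.inv_eq_left_inv hCA
  calc A⁻¹ * B = C * (A * M) := by rw [hAinv, hAM]
    _ = (C * A) * M := by rw [Matrix.mul_assoc]
    _ = M := by rw [hCA, Matrix.one_mul]
end

section
/- Let K be a CM field (a totally imaginary quadratic extension of a totally real field K₀ of degree n), with CM type Φ = (τ₁,…,τₙ) (embeddings K → ℂ, no two complex conjugate). Suppose α ∈ K satisfies τᵢ(α) = i·βᵢ with βᵢ > 0 real for all i. Then H(x,y) = 2∑ᵢ βᵢ τᵢ(x)·conj(τᵢ(y)) is a positive-definite Hermitian form on K ⊗ ℝ ≅ ℂⁿ (via Φ), and its imaginary part satisfies Im H(x,y) = −Tr_{K/ℚ}(α x ȳ) for all x, y ∈ K, where ȳ denotes the complex conjugation of K (the nontrivial element of Gal(K/K₀)). -/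
open Complex Finset

/-- For a CM field `K` with CM type `Φ = (τ₁,…,τₙ)` and `α ∈ K` with
`τᵢ(α) = i·βᵢ`, `βᵢ > 0`, the form `H(z,w) = 2∑ βᵢ zᵢ w̄ᵢ` on `ℂⁿ` is
positive-definite Hermitian, and on `K` (embedded via `Φ`) its imaginary part
is `Im H(x,y) = −Tr_{K/ℚ}(α x ȳ)`, where `ȳ` is the complex conjugation of
`K`. -/
theorem cm_polarization_form
    (K : Type*) [Field K] [NumberField K] (n : ℕ)
    (hn : Module.finrank ℚ K = 2 * n)
    (Φ : Fin n → (K →+* ℂ)) (hΦinj : Function.Injective Φ)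
    (hCM : ∀ i j, Φ i ≠ (starRingEnd ℂ).comp (Φ j))
    (hcover : ∀ τ : K →+* ℂ, ∃ i, τ = Φ i ∨ τ = (starRingEnd ℂ).comp (Φ i))
    (c : K →+* K) (hc2 : ∀ x, c (c x) = x)
    (hc : ∀ i, (Φ i).comp c = (starRingEnd ℂ).comp (Φ i))
    (α : K) (β : Fin n → ℝ) (hβ : ∀ i, 0 < β i)
    (hα : ∀ i, Φ i α = Complex.I * (β i : ℂ))
    (H : (Fin n → ℂ) → (Fin n → ℂ) → ℂ)
    (hH : ∀ z w, H z w = 2 * ∑ i, (β i : ℂ) * z i * starRingEnd ℂ (w i)) :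
    (∀ z w : Fin n → ℂ, H w z = starRingEnd ℂ (H z w)) ∧
    (∀ z : Fin n → ℂ, z ≠ 0 → 0 < (H z z).re) ∧
    (∀ x y : K, (H (fun i => Φ i x) (fun i => Φ i y)).im
      = -((Algebra.trace ℚ K (α * x * c y) : ℚ) : ℝ)) := by
  refine ⟨?_, ?_, ?_⟩
  · intro z w
    simp only [hH, map_mul, map_sum, map_ofNat, Complex.conj_conj, Complex.conj_ofReal]
    congr 1
    exact Finset.sum_congr rfl fun i _ => by ring
  · intro z hz
    obtain ⟨i, hi⟩ := Function.ne_iff.mp hz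
    have hzz : H z z = ((2 * ∑ j, β j * Complex.normSq (z j) : ℝ) : ℂ) := by
      rw [hH]
      push_cast
      congr 1
      exact Finset.sum_congr rfl fun j _ => by rw [mul_assoc, Complex.mul_conj]
    rw [hzz, Complex.ofReal_re]
    have : 0 < ∑ j, β j * Complex.normSq (z j) := by
      apply Finset.sum_pos' (fun j _ => mul_nonneg (hβ j).le (Complex.normSq_nonneg _))
      exact ⟨i, Finset.mem_univ i, mul_pos (hβ i) (by simpa [Complex.normSq_pos] using hi)⟩
    linarith
  · intro x y
    set z := α * x * c y with hz
    -- the embedding count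
    have e : Fin n ⊕ Fin n → (K →+* ℂ) := Sum.elim Φ (fun i => (starRingEnd ℂ).comp (Φ i))
    have hbij : Function.Bijective (Sum.elim Φ (fun i => (starRingEnd ℂ).comp (Φ i))) := by
      constructor
      · rintro (a | a) (b | b) h <;> simp only [Sum.elim_inl, Sum.elim_inr] at h
        · exact congrArg Sum.inl (hΦinj h)
        · exact absurd h (hCM a b)
        · exact absurd h.symm (hCM b a)
        · refine congrArg Sum.inr (hΦinj ?_)
          ext t
          have := congrArg (fun f : K →+* ℂ => starRingEnd ℂ (f t)) h
          simpa using this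
      · intro τ
        obtain ⟨i, hi | hi⟩ := hcover τ
        · exact ⟨Sum.inl i, hi.symm⟩
        · exact ⟨Sum.inr i, hi.symm⟩
    have htr : ((Algebra.trace ℚ K z : ℚ) : ℂ) = ∑ i, (Φ i z + starRingEnd ℂ (Φ i z)) := by
      have h1 : algebraMap ℚ ℂ (Algebra.trace ℚ K z) = ∑ σ : K →ₐ[ℚ] ℂ, σ z :=
        trace_eq_sum_embeddings ℂ
      have h4 : (algebraMap ℚ ℂ) (Algebra.trace ℚ K z) = ((Algebra.trace ℚ K z : ℚ) : ℂ) := by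
        exact eq_ratCast _ _
      have hgbij : Function.Bijective
          (fun p : Fin n ⊕ Fin n => RingHom.equivRatAlgHom K ℂ
            (Sum.elim Φ (fun i => (starRingEnd ℂ).comp (Φ i)) p) : Fin n ⊕ Fin n → (K →ₐ[ℚ] ℂ)) :=
        (RingHom.equivRatAlgHom K ℂ).bijective.comp hbij
      rw [← h4, h1,
        ← Fintype.sum_bijective _ hgbij
          (fun p => (Sum.elim Φ (fun i => (starRingEnd ℂ).comp (Φ i)) p) z)
          (fun σ => σ z) (fun p => rfl),
        Fintype.sum_sum_type, ← Finset.sum_add_distrib]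
      rfl
    have hΦz : ∀ i, Φ i z = Complex.I * (β i : ℂ) * (Φ i x * starRingEnd ℂ (Φ i y)) := by
      intro i
      have hcy : Φ i (c y) = starRingEnd ℂ (Φ i y) := by
        have := congrArg (fun f : K →+* ℂ => f y) (hc i)
        simpa using this
      rw [hz, map_mul, map_mul, hα i, hcy]
      ring
    have hre : ((Algebra.trace ℚ K z : ℚ) : ℝ) = ((Algebra.trace ℚ K z : ℚ) : ℂ).re := by
      simp
    rw [hre, htr, Complex.re_sum, hH, Complex.mul_im, Complex.im_sum]
    simp only [hΦz]
    rw [← Finset.sum_neg_distrib]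
    have key : ∀ i : Fin n,
        -((Complex.I * (β i : ℂ) * (Φ i x * starRingEnd ℂ (Φ i y))
          + starRingEnd ℂ (Complex.I * (β i : ℂ) * (Φ i x * starRingEnd ℂ (Φ i y)))).re)
        = 2 * ((β i : ℝ) * (Φ i x * starRingEnd ℂ (Φ i y)).im) := by
      intro i
      simp only [Complex.add_re, Complex.conj_re, Complex.mul_re, Complex.mul_im,
        Complex.I_re, Complex.I_im, Complex.ofReal_re, Complex.ofReal_im]
      ring
    rw [Finset.sum_congr rfl (fun i _ => key i)]
    have hmi : ∀ i : Fin n, ((β i : ℂ) * Φ i x * starRingEnd ℂ (Φ i y)).im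
        = (β i : ℝ) * (Φ i x * starRingEnd ℂ (Φ i y)).im := by
      intro i
      rw [mul_assoc, Complex.mul_im]
      simp
    rw [Finset.sum_congr rfl (fun i _ => hmi i), ← Finset.mul_sum]
    simp
end
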